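/- CCC special case (Remark 2, r = 0, single path, p = q): Let p ≥ 2 and F_β^α(x_0,…,x_{n-1}) = ∑_{i=1}^{n-1} x_{π(i-1)}x_{π(i)} + ∑γ_i x_i + θ + αx_{π(0)} + βx_{π(n-1)} over ℤ_p. Then the p codes C_α = [χ(F_0^α);…;χ(F_{p-1}^α)], 0 ≤ α < p, form a (p, p, p^n)-CCC: for all α^1, α^2 and all shifts τ with 0 < |τ| < p^n, ∑_{β=0}^{p-1} C_{χ(F_β^{α^1}), χ(F_β^{α^2})}(τ) = 0, and for α^1 ≠ α^2 also ∑_{β=0}^{p-1} C_{χ(F_β^{α^1}), χ(F_β^{α^2})}(0) = 0, while for α^1 = α^2 the zero-shift sum equals p·p^n. -/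

import Mathlib

/-- `ζ_q^e` for an integer exponent `e`. -/
noncomputable def zeta (q : ℕ) (e : ℤ) : ℂ :=
  Complex.exp (2 * Real.pi * Complex.I * (e : ℂ) / (q : ℂ))

/-- the `i`-th base-`p` digit of `I`, for vectors of length `m`. -/
def dgt (p m i I : ℕ) : ℕ := I / p ^ (m - 1 - i) % p

/-- Aperiodic cross-correlation of sequences `a, b` of length `N` at integer shift `τ`. -/
noncomputable def accs (N : ℕ) (a b : ℕ → ℂ) (τ : ℤ) : ℂ :=
  if 0 ≤ τ ∧ τ < (N : ℤ) then
    ∑ i ∈ Finset.range (N - τ.toNat), a (i + τ.toNat) * (starRingEnd ℂ) (b i)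
  else if -(N : ℤ) < τ ∧ τ < 0 then
    ∑ i ∈ Finset.range (N - (-τ).toNat), a i * (starRingEnd ℂ) (b (i + (-τ).toNat))
  else 0

/-- `F_β^α(x) = ∑_{i=1}^{n-1} x_{π(i-1)}x_{π(i)} + ∑ γ_i x_i + θ + αx_{π(0)} + βx_{π(n-1)}`
over `ℤ_p`, evaluated at the base-`p` digit vector of `I`. -/
def Gval (p n : ℕ) (hn : 1 ≤ n) (π : Equiv.Perm (Fin n)) (γ : Fin n → ℕ) (θ : ℕ)
    (α β I : ℕ) : ℤ :=
  (∑ i : Fin n, if h : 1 ≤ (i : ℕ) then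
      (dgt p n (π ⟨(i : ℕ) - 1, by omega⟩) I : ℤ) * (dgt p n (π i) I : ℤ) else 0)
  + ∑ i : Fin n, (γ i : ℤ) * (dgt p n i I : ℤ) + (θ : ℤ)
  + (α : ℤ) * (dgt p n (π ⟨0, by omega⟩) I : ℤ)
  + (β : ℤ) * (dgt p n (π ⟨n - 1, by omega⟩) I : ℤ)

lemma zeta_add (q : ℕ) (e f : ℤ) : zeta q (e + f) = zeta q e * zeta q f := by
  unfold zeta
  rw [← Complex.exp_add]
  congr 1
  push_cast
  ring

lemma zeta_zero (q : ℕ) : zeta q 0 = 1 := by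
  unfold zeta; simp

lemma conj_zeta (q : ℕ) (e : ℤ) : (starRingEnd ℂ) (zeta q e) = zeta q (-e) := by
  unfold zeta
  rw [← Complex.exp_conj]
  congr 1
  simp only [map_div₀, map_mul, Complex.conj_I, Complex.conj_ofReal, map_ofNat,
    map_intCast (starRingEnd ℂ), Complex.conj_natCast]
  push_cast
  ring

lemma zeta_natCast_mul (q : ℕ) (hq : 1 ≤ q) (e : ℤ) : zeta q ((q : ℤ) * e) = 1 := by
  unfold zeta
  have hq0 : (q : ℂ) ≠ 0 := by
    exact_mod_cast Nat.pos_iff_ne_zero.mp hq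
  have : 2 * (Real.pi : ℂ) * Complex.I * (((q : ℤ) * e : ℤ) : ℂ) / (q : ℂ)
      = (e : ℂ) * (2 * Real.pi * Complex.I) := by
    push_cast; field_simp
  rw [this, Complex.exp_int_mul_two_pi_mul_I]

lemma zeta_nat_mul (q : ℕ) (k : ℕ) (c : ℤ) : zeta q ((k : ℤ) * c) = (zeta q c) ^ k := by
  induction k with
  | zero => simpa using zeta_zero q
  | succ k ih =>
    have : ((k + 1 : ℕ) : ℤ) * c = (k : ℤ) * c + c := by push_cast; ring
    rw [this, zeta_add, ih, pow_succ]

lemma zeta_eq_one_iff (q : ℕ) (hq : 1 ≤ q) (c : ℤ) : zeta q c = 1 ↔ (q : ℤ) ∣ c := by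
  have hq0 : (q : ℂ) ≠ 0 := by exact_mod_cast Nat.pos_iff_ne_zero.mp hq
  have hpi : (2 : ℂ) * Real.pi * Complex.I ≠ 0 := by
    simp [Complex.I_ne_zero, Real.pi_ne_zero, Complex.ofReal_ne_zero]
  constructor
  · intro h
    unfold zeta at h
    rw [Complex.exp_eq_one_iff] at h
    obtain ⟨m, hm⟩ := h
    have h2 : (2 : ℂ) * Real.pi * Complex.I * (c : ℂ)
        = (2 : ℂ) * Real.pi * Complex.I * ((m : ℂ) * q) := by
      field_simp at hm
      linear_combination (2 * (Real.pi : ℂ) * Complex.I) * hm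
    have h3 : (c : ℂ) = (m : ℂ) * q := mul_left_cancel₀ hpi h2
    refine ⟨m, ?_⟩
    have : (c : ℂ) = ((q * m : ℤ) : ℂ) := by push_cast; linear_combination h3
    exact_mod_cast this
  · rintro ⟨m, rfl⟩
    exact zeta_natCast_mul q hq m

lemma zeta_sum_orth (q : ℕ) (hq : 1 ≤ q) (c : ℤ) :
    ∑ k ∈ Finset.range q, zeta q ((k : ℤ) * c) = if (q : ℤ) ∣ c then (q : ℂ) else 0 := by
  by_cases h : (q : ℤ) ∣ c
  · simp only [h, if_true]
    have h1 : ∀ k ∈ Finset.range q, zeta q ((k : ℤ) * c) = 1 := by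
      intro k _
      obtain ⟨m, rfl⟩ := h
      rw [show (k : ℤ) * ((q : ℤ) * m) = (q : ℤ) * ((k : ℤ) * m) by ring]
      exact zeta_natCast_mul q hq _
    rw [Finset.sum_congr rfl h1]
    simp
  · simp only [h, if_false]
    have hx1 : zeta q c ≠ 1 := fun hc => h ((zeta_eq_one_iff q hq c).mp hc)
    have hxq : (zeta q c) ^ q = 1 := by
      rw [← zeta_nat_mul, show ((q : ℕ) : ℤ) * c = (q : ℤ) * c from rfl]
      exact zeta_natCast_mul q hq c
    calc ∑ k ∈ Finset.range q, zeta q ((k : ℤ) * c) = ∑ k ∈ Finset.range q, (zeta q c)^k :=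
          Finset.sum_congr rfl fun k _ => zeta_nat_mul q k c
      _ = ((zeta q c)^q - 1)/(zeta q c - 1) := geom_sum_eq hx1 q
      _ = 0 := by rw [hxq]; simp

lemma zeta_sum_orth' (q : ℕ) (hq : 1 ≤ q) (d : ℤ) (hd : |d| < q) :
    ∑ k ∈ Finset.range q, zeta q ((k : ℤ) * d) = if d = 0 then (q : ℂ) else 0 := by
  rw [zeta_sum_orth q hq d]
  by_cases h0 : d = 0
  · simp [h0]
  · have : ¬ ((q : ℤ) ∣ d) := by
      intro hdvd
      have := Int.le_of_dvd (abs_pos.mpr h0) ((dvd_abs _ _).mpr hdvd)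
      omega
    simp [this, h0]


def encL (p : ℕ) (g : ℕ → ℕ) (m : ℕ) : ℕ := ∑ j ∈ Finset.range m, g j * p ^ j

lemma encL_lt (p : ℕ) (hp : 1 ≤ p) (g : ℕ → ℕ) (hg : ∀ j, g j < p) (m : ℕ) :
    encL p g m < p ^ m := by
  induction m with
  | zero => simp [encL]
  | succ m ih =>
    rw [encL, Finset.sum_range_succ]
    have h1 : g m * p ^ m ≤ (p - 1) * p ^ m := Nat.mul_le_mul_right _ (by have := hg m; omega)
    have h2 : encL p g m < p ^ m := ih
    have h3 : (p - 1) * p ^ m + p ^ m = p ^ (m + 1) := by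
      cases p with
      | zero => omega
      | succ q => simp only [Nat.succ_sub_one, pow_succ]; ring
    calc encL p g m + g m * p ^ m < p ^ m + (p-1) * p ^ m := by omega
      _ = p ^ (m+1) := by omega

lemma encL_split (p : ℕ) (g : ℕ → ℕ) (m : ℕ) :
    encL p g (m + 1) = g 0 + p * encL p (fun j => g (j+1)) m := by
  rw [encL, Finset.sum_range_succ', encL, Finset.mul_sum]
  simp only [pow_zero, mul_one]
  rw [add_comm]
  congr 1
  apply Finset.sum_congr rfl
  intro j _
  rw [pow_succ]; ring

lemma encL_digit (p : ℕ) (hp : 1 ≤ p) :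
    ∀ i (g : ℕ → ℕ), (∀ j, g j < p) → ∀ m, i < m → encL p g m / p ^ i % p = g i := by
  intro i
  induction i with
  | zero =>
    intro g hg m hm
    obtain ⟨m', rfl⟩ : ∃ m', m = m' + 1 := ⟨m - 1, by omega⟩
    rw [encL_split]
    simp [Nat.add_mul_mod_self_left, Nat.mod_eq_of_lt (hg 0)]
  | succ i ih =>
    intro g hg m hm
    obtain ⟨m', rfl⟩ : ∃ m', m = m' + 1 := ⟨m - 1, by omega⟩
    rw [encL_split, pow_succ', ← Nat.div_div_eq_div_mul]
    rw [Nat.add_mul_div_left _ _ (by omega : 0 < p), Nat.div_eq_of_lt (hg 0)]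
    simp only [Nat.zero_add]
    exact ih (fun j => g (j+1)) (fun j => hg (j+1)) m' (by omega)

lemma decompL (p : ℕ) (hp : 1 ≤ p) :
    ∀ m I, I < p ^ m → ∑ j ∈ Finset.range m, (I / p ^ j % p) * p ^ j = I := by
  intro m
  induction m with
  | zero => intro I hI; simp at hI ⊢; omega
  | succ m ih =>
    intro I hI
    rw [Finset.sum_range_succ']
    have h2 : ∀ j, I / p ^ (j+1) % p * p ^ (j+1) = p * ((I/p) / p ^ j % p * p ^ j) := by
      intro j
      rw [pow_succ', ← Nat.div_div_eq_div_mul]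
      ring
    rw [Finset.sum_congr rfl (fun j _ => h2 j), ← Finset.mul_sum,
      ih (I/p) (Nat.div_lt_of_lt_mul (by rw [← pow_succ']; exact hI))]
    simp only [pow_zero, Nat.pow_zero, mul_one, Nat.div_one]
    rw [Nat.add_comm]
    exact Nat.mod_add_div I p

lemma dgt_lt (p m i I : ℕ) (hp : 1 ≤ p) : dgt p m i I < p := by
  unfold dgt; exact Nat.mod_lt _ (by omega)


/-- the path quadratic form -/
def Q (p m : ℕ) (a : Fin m → Fin p) : ℤ :=
  ∑ i : Fin m, if h : 1 ≤ (i : ℕ) then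
    ((a ⟨(i : ℕ) - 1, Nat.lt_of_le_of_lt (Nat.sub_le _ _) i.isLt⟩ : ℤ) * ((a i : ℕ) : ℤ)) else 0

lemma Q_snoc (p m : ℕ) (a : Fin (m+1) → Fin p) (y : Fin p) :
    Q p (m+2) (Fin.snoc a y) = Q p (m+1) a + ((a (Fin.last m) : ℤ)) * (y : ℤ) := by
  unfold Q
  rw [Fin.sum_univ_castSucc]
  congr 1
  · apply Finset.sum_congr rfl
    intro i _
    by_cases h : 1 ≤ (i : ℕ)
    · rw [dif_pos, dif_pos h]
      · congr 2
        · have h1 : ((⟨((i.castSucc : Fin (m+2)) : ℕ) - 1,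
              Nat.lt_of_le_of_lt (Nat.sub_le _ _) (i.castSucc).isLt⟩ : Fin (m+2)))
              = Fin.castSucc ⟨(i : ℕ) - 1, Nat.lt_of_le_of_lt (Nat.sub_le _ _) i.isLt⟩ := by
            apply Fin.ext; simp
          rw [h1, Fin.snoc_castSucc]
        · rw [show ((i.castSucc : Fin (m+2))) = Fin.castSucc i from rfl, Fin.snoc_castSucc]
      · simpa using h
    · rw [dif_neg, dif_neg h]
      simpa using h
  · rw [dif_pos]
    · congr 2
      · have h1 : (⟨((Fin.last (m+1) : Fin (m+2)) : ℕ) - 1,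
            Nat.lt_of_le_of_lt (Nat.sub_le _ _) (Fin.last (m+1)).isLt⟩ : Fin (m+2))
            = Fin.castSucc (Fin.last m) := by apply Fin.ext; simp
        rw [h1, Fin.snoc_castSucc]
      · rw [Fin.snoc_last]
    · simp

lemma Q_one (p : ℕ) (a : Fin 1 → Fin p) : Q p 1 a = 0 := by
  simp [Q]

lemma claimT (p M : ℕ) (hp : 2 ≤ p) (hM : 1 ≤ M) (α1 α2 : ℤ) :
    ∀ m (c t : Fin (m+1) → ℤ),
    (∑ a : Fin (m+1) → Fin p, ∑ b : Fin (m+1) → Fin p,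
      (if a (Fin.last m) = b (Fin.last m) then
        zeta p ((Q p (m+1) a - Q p (m+1) b + ∑ u, c u * (((a u : ℕ) : ℤ) - ((b u : ℕ) : ℤ)))
          + (α1 * ((a 0 : ℕ) : ℤ) - α2 * ((b 0 : ℕ) : ℤ)))
        * zeta M (∑ u, t u * (((a u : ℕ) : ℤ) - ((b u : ℕ) : ℤ)))
       else 0))
    = (p : ℂ) ^ m * ∑ y ∈ Finset.range p, zeta p ((α1 - α2) * y) := by
  intro m
  induction m with
  | zero =>
    intro c t
    have h1 : ∀ (F : (Fin 1 → Fin p) → ℂ), ∑ a, F a = ∑ x : Fin p, F (fun _ => x) := by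
      intro F
      exact (Equiv.sum_comp (Equiv.funUnique (Fin 1) (Fin p)).symm F).symm
    rw [h1]
    simp only [h1]
    have h2 : ∀ x x' : Fin p, (fun (_ : Fin 1) => x) (Fin.last 0) = (fun (_ : Fin 1) => x') (Fin.last 0) ↔ x = x' := by
      intro x x'; constructor <;> (intro h; exact h)
    have h3 : ∀ x : Fin p,
        (∑ x' : Fin p, if (fun (_ : Fin 1) => x) (Fin.last 0) = (fun (_ : Fin 1) => x') (Fin.last 0) then
          zeta p ((Q p 1 (fun _ => x) - Q p 1 (fun _ => x')
              + ∑ u : Fin 1, c u * ((((x : Fin p) : ℕ) : ℤ) - (((x' : Fin p) : ℕ) : ℤ)))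
            + (α1 * ((x : ℕ) : ℤ) - α2 * ((x' : ℕ) : ℤ)))
          * zeta M (∑ u : Fin 1, t u * ((((x : Fin p) : ℕ) : ℤ) - (((x' : Fin p) : ℕ) : ℤ)))
         else 0)
        = zeta p ((α1 - α2) * ((x : ℕ) : ℤ)) := by
      intro x
      rw [Finset.sum_ite_eq Finset.univ x]
      simp only [Finset.mem_univ, if_true, Q_one, sub_self, mul_zero, Finset.sum_const_zero,
        zeta_zero, mul_one]
      congr 1
      ring
    rw [Finset.sum_congr rfl (fun x _ => h3 x)]
    rw [pow_zero, one_mul]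
    exact Fin.sum_univ_eq_sum_range (fun y => zeta p ((α1 - α2) * y)) p
  | succ m ih =>
    intro c t
    have hsnoc : ∀ (F : (Fin (m+2) → Fin p) → ℂ), ∑ a, F a
        = ∑ y : Fin p, ∑ a' : Fin (m+1) → Fin p, F (Fin.snoc a' y) := by
      intro F
      rw [← Equiv.sum_comp (Fin.snocEquiv (fun _ => Fin p)) F, Fintype.sum_prod_type]
      rfl
    have keyb : ∀ (y : Fin p) (f : (Fin (m+2) → Fin p) → ℂ),
        (∑ b : Fin (m+2) → Fin p, if y = b (Fin.last (m+1)) then f b else 0)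
        = ∑ b' : Fin (m+1) → Fin p, f (Fin.snoc b' y) := by
      intro y f
      rw [hsnoc (fun b => if y = b (Fin.last (m+1)) then f b else 0)]
      simp only [Fin.snoc_last]
      rw [Finset.sum_comm]
      apply Finset.sum_congr rfl
      intro b' _
      rw [Finset.sum_ite_eq Finset.univ y (fun y' => f (Fin.snoc b' y'))]
      simp
    rw [hsnoc]
    simp only [Fin.snoc_last]
    simp only [keyb]
    -- now : ∑ y, ∑ a', ∑ b', g (snoc a' y) (snoc b' y)
    rw [Finset.sum_comm]
    have hswap : ∀ (h : Fin p → (Fin (m+1) → Fin p) → ℂ) ,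
        (∑ a' : Fin (m+1) → Fin p, ∑ y : Fin p, h y a') = ∑ a', ∑ y, h y a' := fun _ => rfl
    have point : ∀ (a' b' : Fin (m+1) → Fin p),
        (∑ y : Fin p, zeta p ((Q p (m+2) (Fin.snoc a' y) - Q p (m+2) (Fin.snoc b' y)
              + ∑ u : Fin (m+2), c u * ((((Fin.snoc (α := fun _ => Fin p) a' y u) : ℕ) : ℤ) - (((Fin.snoc (α := fun _ => Fin p) b' y u) : ℕ) : ℤ)))
            + (α1 * (((Fin.snoc (α := fun _ => Fin p) a' y 0) : ℕ) : ℤ) - α2 * (((Fin.snoc (α := fun _ => Fin p) b' y 0) : ℕ) : ℤ)))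
          * zeta M (∑ u : Fin (m+2), t u * ((((Fin.snoc (α := fun _ => Fin p) a' y u) : ℕ) : ℤ) - (((Fin.snoc (α := fun _ => Fin p) b' y u) : ℕ) : ℤ))))
        = (p : ℂ) * (if a' (Fin.last m) = b' (Fin.last m) then
            zeta p ((Q p (m+1) a' - Q p (m+1) b'
              + ∑ u : Fin (m+1), c u.castSucc * (((a' u : ℕ) : ℤ) - ((b' u : ℕ) : ℤ)))
            + (α1 * ((a' 0 : ℕ) : ℤ) - α2 * ((b' 0 : ℕ) : ℤ)))
          * zeta M (∑ u : Fin (m+1), t u.castSucc * (((a' u : ℕ) : ℤ) - ((b' u : ℕ) : ℤ))) else 0) := by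
      intro a' b'
      have hlin : ∀ (c : Fin (m+2) → ℤ) (y : Fin p),
          (∑ u : Fin (m+2), c u * ((((Fin.snoc (α := fun _ => Fin p) a' y u) : ℕ) : ℤ) - (((Fin.snoc (α := fun _ => Fin p) b' y u) : ℕ) : ℤ)))
          = ∑ u : Fin (m+1), c u.castSucc * (((a' u : ℕ) : ℤ) - ((b' u : ℕ) : ℤ)) := by
        intro c y
        rw [Fin.sum_univ_castSucc]
        simp [Fin.snoc_castSucc, Fin.snoc_last]
      have h00 : ∀ y : Fin p, Fin.snoc (α := fun _ => Fin p) a' y 0 = a' 0 := by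
        intro y
        rw [show (0 : Fin (m+2)) = Fin.castSucc 0 from rfl, Fin.snoc_castSucc]
      have h00' : ∀ y : Fin p, Fin.snoc (α := fun _ => Fin p) b' y 0 = b' 0 := by
        intro y
        rw [show (0 : Fin (m+2)) = Fin.castSucc 0 from rfl, Fin.snoc_castSucc]
      set d : ℤ := ((a' (Fin.last m) : ℕ) : ℤ) - ((b' (Fin.last m) : ℕ) : ℤ) with hd
      set E' : ℂ := zeta p ((Q p (m+1) a' - Q p (m+1) b'
              + ∑ u : Fin (m+1), c u.castSucc * (((a' u : ℕ) : ℤ) - ((b' u : ℕ) : ℤ)))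
            + (α1 * ((a' 0 : ℕ) : ℤ) - α2 * ((b' 0 : ℕ) : ℤ)))
          * zeta M (∑ u : Fin (m+1), t u.castSucc * (((a' u : ℕ) : ℤ) - ((b' u : ℕ) : ℤ))) with hE
      have perY : ∀ y : Fin p,
          zeta p ((Q p (m+2) (Fin.snoc a' y) - Q p (m+2) (Fin.snoc b' y)
              + ∑ u : Fin (m+2), c u * ((((Fin.snoc (α := fun _ => Fin p) a' y u) : ℕ) : ℤ) - (((Fin.snoc (α := fun _ => Fin p) b' y u) : ℕ) : ℤ)))
            + (α1 * (((Fin.snoc (α := fun _ => Fin p) a' y 0) : ℕ) : ℤ) - α2 * (((Fin.snoc (α := fun _ => Fin p) b' y 0) : ℕ) : ℤ)))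
          * zeta M (∑ u : Fin (m+2), t u * ((((Fin.snoc (α := fun _ => Fin p) a' y u) : ℕ) : ℤ) - (((Fin.snoc (α := fun _ => Fin p) b' y u) : ℕ) : ℤ)))
          = zeta p (((y : ℕ) : ℤ) * d) * E' := by
        intro y
        rw [Q_snoc, Q_snoc, hlin c y, hlin t y, h00 y, h00' y]
        rw [show (Q p (m+1) a' + ((a' (Fin.last m) : ℕ) : ℤ) * ((y : ℕ) : ℤ)
              - (Q p (m+1) b' + ((b' (Fin.last m) : ℕ) : ℤ) * ((y : ℕ) : ℤ))
              + ∑ u : Fin (m+1), c u.castSucc * (((a' u : ℕ) : ℤ) - ((b' u : ℕ) : ℤ)))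
            + (α1 * ((a' 0 : ℕ) : ℤ) - α2 * ((b' 0 : ℕ) : ℤ))
            = ((y : ℕ) : ℤ) * d + ((Q p (m+1) a' - Q p (m+1) b'
              + ∑ u : Fin (m+1), c u.castSucc * (((a' u : ℕ) : ℤ) - ((b' u : ℕ) : ℤ)))
            + (α1 * ((a' 0 : ℕ) : ℤ) - α2 * ((b' 0 : ℕ) : ℤ))) by rw [hd]; ring]
        rw [zeta_add, hE]
        ring
      rw [Finset.sum_congr rfl (fun y _ => perY y), ← Finset.sum_mul]
      have horth : (∑ y : Fin p, zeta p (((y : ℕ) : ℤ) * d)) = if d = 0 then (p:ℂ) else 0 := by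
        rw [Fin.sum_univ_eq_sum_range (fun k => zeta p ((k : ℤ) * d)) p]
        apply zeta_sum_orth' p (by omega) d
        have h1 : ((a' (Fin.last m) : ℕ) : ℤ) < p := by exact_mod_cast (a' (Fin.last m)).isLt
        have h2 : ((b' (Fin.last m) : ℕ) : ℤ) < p := by exact_mod_cast (b' (Fin.last m)).isLt
        have h3 : (0:ℤ) ≤ ((a' (Fin.last m) : ℕ) : ℤ) := Int.natCast_nonneg _
        have h4 : (0:ℤ) ≤ ((b' (Fin.last m) : ℕ) : ℤ) := Int.natCast_nonneg _
        rw [hd, abs_lt]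
        omega
      rw [horth]
      have hcond : (d = 0) ↔ (a' (Fin.last m) = b' (Fin.last m)) := by
        rw [hd, sub_eq_zero]
        constructor
        · intro h; exact Fin.ext (by exact_mod_cast h)
        · intro h; rw [h]
      by_cases hc : a' (Fin.last m) = b' (Fin.last m)
      · rw [if_pos (hcond.mpr hc), if_pos hc]
      · rw [if_neg (fun h => hc (hcond.mp h)), if_neg hc, zero_mul, mul_zero]
    have step2 : ∀ a' : Fin (m+1) → Fin p,
        (∑ b' : Fin (m+1) → Fin p,
          ∑ y : Fin p, zeta p ((Q p (m+2) (Fin.snoc a' y) - Q p (m+2) (Fin.snoc b' y)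
              + ∑ u : Fin (m+2), c u * ((((Fin.snoc (α := fun _ => Fin p) a' y u) : ℕ) : ℤ) - (((Fin.snoc (α := fun _ => Fin p) b' y u) : ℕ) : ℤ)))
            + (α1 * (((Fin.snoc (α := fun _ => Fin p) a' y 0) : ℕ) : ℤ) - α2 * (((Fin.snoc (α := fun _ => Fin p) b' y 0) : ℕ) : ℤ)))
          * zeta M (∑ u : Fin (m+2), t u * ((((Fin.snoc (α := fun _ => Fin p) a' y u) : ℕ) : ℤ) - (((Fin.snoc (α := fun _ => Fin p) b' y u) : ℕ) : ℤ))))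
        = (p:ℂ) * ∑ b' : Fin (m+1) → Fin p, (if a' (Fin.last m) = b' (Fin.last m) then
            zeta p ((Q p (m+1) a' - Q p (m+1) b'
              + ∑ u : Fin (m+1), c u.castSucc * (((a' u : ℕ) : ℤ) - ((b' u : ℕ) : ℤ)))
            + (α1 * ((a' 0 : ℕ) : ℤ) - α2 * ((b' 0 : ℕ) : ℤ)))
          * zeta M (∑ u : Fin (m+1), t u.castSucc * (((a' u : ℕ) : ℤ) - ((b' u : ℕ) : ℤ))) else 0) := by
      intro a'
      rw [Finset.mul_sum]
      exact Finset.sum_congr rfl (fun b' _ => point a' b')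
    -- reorder ∑ a' ∑ b' ∑ y
    have reorder : ∀ a' : Fin (m+1) → Fin p,
        (∑ y : Fin p, ∑ b' : Fin (m+1) → Fin p, zeta p ((Q p (m+2) (Fin.snoc a' y) - Q p (m+2) (Fin.snoc b' y)
              + ∑ u : Fin (m+2), c u * ((((Fin.snoc (α := fun _ => Fin p) a' y u) : ℕ) : ℤ) - (((Fin.snoc (α := fun _ => Fin p) b' y u) : ℕ) : ℤ)))
            + (α1 * (((Fin.snoc (α := fun _ => Fin p) a' y 0) : ℕ) : ℤ) - α2 * (((Fin.snoc (α := fun _ => Fin p) b' y 0) : ℕ) : ℤ)))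
          * zeta M (∑ u : Fin (m+2), t u * ((((Fin.snoc (α := fun _ => Fin p) a' y u) : ℕ) : ℤ) - (((Fin.snoc (α := fun _ => Fin p) b' y u) : ℕ) : ℤ))))
        = ∑ b' : Fin (m+1) → Fin p, ∑ y : Fin p, zeta p ((Q p (m+2) (Fin.snoc a' y) - Q p (m+2) (Fin.snoc b' y)
              + ∑ u : Fin (m+2), c u * ((((Fin.snoc (α := fun _ => Fin p) a' y u) : ℕ) : ℤ) - (((Fin.snoc (α := fun _ => Fin p) b' y u) : ℕ) : ℤ)))
            + (α1 * (((Fin.snoc (α := fun _ => Fin p) a' y 0) : ℕ) : ℤ) - α2 * (((Fin.snoc (α := fun _ => Fin p) b' y 0) : ℕ) : ℤ)))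
          * zeta M (∑ u : Fin (m+2), t u * ((((Fin.snoc (α := fun _ => Fin p) a' y u) : ℕ) : ℤ) - (((Fin.snoc (α := fun _ => Fin p) b' y u) : ℕ) : ℤ))) :=
      fun a' => Finset.sum_comm
    rw [Finset.sum_congr rfl (fun a' _ => (reorder a').trans (step2 a')), ← Finset.mul_sum,
      ih (fun u => c u.castSucc) (fun u => t u.castSucc)]
    rw [pow_succ]
    ring


def enc (p n : ℕ) (v : Fin n → Fin p) : ℕ := ∑ i : Fin n, (v i : ℕ) * p ^ (n - 1 - (i : ℕ))

/-- auxiliary little-endian digit function of `v` -/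
def gv (p n : ℕ) (v : Fin n → Fin p) (j : ℕ) : ℕ :=
  if h : j < n then (v ⟨n - 1 - j, by omega⟩ : ℕ) else 0

lemma gv_lt (p n : ℕ) (hp : 1 ≤ p) (v : Fin n → Fin p) (j : ℕ) : gv p n v j < p := by
  unfold gv; split
  · exact (v _).isLt
  · omega

lemma enc_eq_encL (p n : ℕ) (v : Fin n → Fin p) : enc p n v = encL p (gv p n v) n := by
  rw [enc, encL, ← Fin.sum_univ_eq_sum_range (fun j => gv p n v j * p ^ j) n]
  apply Finset.sum_nbij' (fun i => Fin.rev i) (fun i => Fin.rev i) <;>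
    simp only [Finset.mem_univ, imp_true_iff, eq_self_iff_true, forall_true_iff]
  · intro i _; simp
  · intro i _; simp
  · intro i _
    unfold gv
    rw [dif_pos]
    · have hv : (⟨n - 1 - ((Fin.rev i : Fin n) : ℕ), by omega⟩ : Fin n) = i := by
        apply Fin.ext
        simp [Fin.rev]
        omega
      rw [hv]
      congr 1
      congr 1
      simp [Fin.rev]
      omega
    · exact (Fin.rev i).isLt

lemma enc_lt (p n : ℕ) (hp : 1 ≤ p) (v : Fin n → Fin p) : enc p n v < p ^ n := by
  rw [enc_eq_encL]; exact encL_lt p hp _ (gv_lt p n hp v) n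

lemma dgt_enc (p n : ℕ) (hp : 1 ≤ p) (v : Fin n → Fin p) (i : Fin n) :
    dgt p n (i : ℕ) (enc p n v) = (v i : ℕ) := by
  rw [enc_eq_encL, dgt]
  rw [encL_digit p hp (n - 1 - (i : ℕ)) (gv p n v) (gv_lt p n hp v) n (by omega)]
  unfold gv
  rw [dif_pos (by omega)]
  congr 1
  congr 1
  apply Fin.ext
  have := i.isLt
  show n - 1 - (n - 1 - (i : ℕ)) = (i : ℕ)
  omega

lemma enc_dgt (p n : ℕ) (hp : 1 ≤ p) (I : ℕ) (hI : I < p ^ n) :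
    enc p n (fun i => (⟨dgt p n (i : ℕ) I, dgt_lt p n _ I hp⟩ : Fin p)) = I := by
  rw [enc_eq_encL, encL]
  have h : ∀ j ∈ Finset.range n, gv p n (fun i => (⟨dgt p n (i : ℕ) I, dgt_lt p n _ I hp⟩ : Fin p)) j * p ^ j
      = (I / p ^ j % p) * p ^ j := by
    intro j hj
    rw [Finset.mem_range] at hj
    unfold gv
    rw [dif_pos hj]
    simp only [dgt]
    show I / p ^ (n - 1 - (n - 1 - j)) % p * p ^ j = I / p ^ j % p * p ^ j
    rw [show n - 1 - (n - 1 - j) = j by omega]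
  rw [Finset.sum_congr rfl h]
  exact decompL p hp n I hI

lemma Gval_enc (p : ℕ) (hp : 1 ≤ p) (m : ℕ) (hn : 1 ≤ m + 1) (π : Equiv.Perm (Fin (m+1)))
    (γ : Fin (m+1) → ℕ) (θ : ℕ) (α β : ℕ) (w : Fin (m+1) → Fin p) :
    Gval p (m+1) hn π γ θ α β (enc p (m+1) (fun i => w (π.symm i)))
    = Q p (m+1) w + (∑ u : Fin (m+1), (γ (π u) : ℤ) * ((w u : ℕ) : ℤ)) + (θ : ℤ)
      + (α : ℤ) * ((w 0 : ℕ) : ℤ) + (β : ℤ) * ((w (Fin.last m) : ℕ) : ℤ) := by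
  have hkey : ∀ j : Fin (m+1),
      dgt p (m+1) (j : ℕ) (enc p (m+1) (fun i => w (π.symm i))) = (w (π.symm j) : ℕ) := by
    intro j
    exact dgt_enc p (m+1) hp (fun i => w (π.symm i)) j
  have hkey2 : ∀ j : Fin (m+1),
      dgt p (m+1) ((π j : Fin (m+1)) : ℕ) (enc p (m+1) (fun i => w (π.symm i))) = (w j : ℕ) := by
    intro j
    rw [hkey (π j), Equiv.symm_apply_apply]
  unfold Gval Q
  simp only [hkey2, hkey]
  have hlin : (∑ i : Fin (m+1), (γ i : ℤ) * ((w (π.symm i) : ℕ) : ℤ))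
      = ∑ u : Fin (m+1), (γ (π u) : ℤ) * ((w u : ℕ) : ℤ) := by
    rw [← Equiv.sum_comp π (fun i => (γ i : ℤ) * ((w (π.symm i) : ℕ) : ℤ))]
    apply Finset.sum_congr rfl
    intro u _
    rw [Equiv.symm_apply_apply]
  rw [hlin]
  rfl

lemma enc_reindex (p : ℕ) (m : ℕ) (π : Equiv.Perm (Fin (m+1))) (w : Fin (m+1) → Fin p) :
    ((enc p (m+1) (fun i => w (π.symm i)) : ℕ) : ℤ)
    = ∑ u : Fin (m+1), ((p ^ (m + 1 - 1 - ((π u : Fin (m+1)) : ℕ)) : ℕ) : ℤ) * ((w u : ℕ) : ℤ) := by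
  rw [enc, Nat.cast_sum]
  rw [← Equiv.sum_comp π (fun i => (((w (π.symm i) : ℕ) * p ^ (m + 1 - 1 - (i : ℕ)) : ℕ) : ℤ))]
  apply Finset.sum_congr rfl
  intro u _
  rw [Equiv.symm_apply_apply]
  push_cast
  ring

lemma lemA (p m : ℕ) (hp : 2 ≤ p) (hn : 1 ≤ m + 1) (π : Equiv.Perm (Fin (m+1)))
    (γ : Fin (m+1) → ℕ) (θ : ℕ) (α1 α2 : ℕ) (hα1 : α1 < p) (hα2 : α2 < p)
    (M : ℕ) (hM : 1 ≤ M) (K : ℕ) :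
    (∑ β ∈ Finset.range p, ∑ I ∈ Finset.range (p^(m+1)), ∑ J ∈ Finset.range (p^(m+1)),
      zeta p (Gval p (m+1) hn π γ θ α1 β I)
      * (starRingEnd ℂ) (zeta p (Gval p (m+1) hn π γ θ α2 β J))
      * zeta M ((K:ℤ) * ((I:ℤ) - (J:ℤ))))
    = if α1 = α2 then (p:ℂ)^(m+2) else 0 := by
  have hp1 : 1 ≤ p := by omega
  set ev : (Fin (m+1) → Fin p) → ℕ :=
    fun w => enc p (m+1) (fun i => w (π.symm i)) with hev
  have reidx : ∀ f : ℕ → ℂ,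
      (∑ I ∈ Finset.range (p^(m+1)), f I) = ∑ w : Fin (m+1) → Fin p, f (ev w) := by
    intro f
    have hli : ∀ I ∈ Finset.range (p^(m+1)),
        ev (fun u => (⟨dgt p (m+1) ((π u : Fin (m+1)) : ℕ) I, dgt_lt p (m+1) _ I hp1⟩ : Fin p))
        = I := by
      intro I hI
      rw [Finset.mem_range] at hI
      rw [hev]
      have hfe : (fun i : Fin (m+1) =>
            (⟨dgt p (m+1) ((π (π.symm i) : Fin (m+1)) : ℕ) I, dgt_lt p (m+1) _ I hp1⟩ : Fin p))
          = fun i : Fin (m+1) => (⟨dgt p (m+1) (i : ℕ) I, dgt_lt p (m+1) _ I hp1⟩ : Fin p) := by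
        funext i
        apply Fin.ext
        show dgt p (m+1) ((π (π.symm i) : Fin (m+1)) : ℕ) I = dgt p (m+1) (i : ℕ) I
        rw [Equiv.apply_symm_apply]
      show enc p (m+1) (fun i =>
        (⟨dgt p (m+1) ((π (π.symm i) : Fin (m+1)) : ℕ) I, dgt_lt p (m+1) _ I hp1⟩ : Fin p)) = I
      rw [hfe]
      exact enc_dgt p (m+1) hp1 I hI
    apply Finset.sum_nbij'
      (fun I => fun u => (⟨dgt p (m+1) ((π u : Fin (m+1)) : ℕ) I, dgt_lt p (m+1) _ I hp1⟩ : Fin p))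
      (fun w => ev w)
    · intro I _; exact Finset.mem_univ _
    · intro w _; exact Finset.mem_range.mpr (enc_lt p (m+1) hp1 _)
    · exact hli
    · intro w _
      funext u
      apply Fin.ext
      show dgt p (m+1) ((π u : Fin (m+1)) : ℕ) (enc p (m+1) fun i => w (π.symm i)) = (w u : ℕ)
      rw [dgt_enc p (m+1) hp1 (fun i => w (π.symm i)) (π u), Equiv.symm_apply_apply]
    · intro I hI
      rw [hli I hI]
  calc (∑ β ∈ Finset.range p, ∑ I ∈ Finset.range (p^(m+1)), ∑ J ∈ Finset.range (p^(m+1)),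
      zeta p (Gval p (m+1) hn π γ θ α1 β I)
      * (starRingEnd ℂ) (zeta p (Gval p (m+1) hn π γ θ α2 β J))
      * zeta M ((K:ℤ) * ((I:ℤ) - (J:ℤ))))
      = ∑ β ∈ Finset.range p, ∑ wa : Fin (m+1) → Fin p, ∑ wb : Fin (m+1) → Fin p,
          zeta p (Gval p (m+1) hn π γ θ α1 β (ev wa))
          * (starRingEnd ℂ) (zeta p (Gval p (m+1) hn π γ θ α2 β (ev wb)))
          * zeta M ((K:ℤ) * (((ev wa : ℕ):ℤ) - ((ev wb : ℕ):ℤ))) := by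
        apply Finset.sum_congr rfl; intro β _
        rw [reidx]
        apply Finset.sum_congr rfl; intro wa _
        rw [reidx]
    _ = ∑ wa : Fin (m+1) → Fin p, ∑ wb : Fin (m+1) → Fin p, ∑ β ∈ Finset.range p,
          zeta p (Gval p (m+1) hn π γ θ α1 β (ev wa))
          * (starRingEnd ℂ) (zeta p (Gval p (m+1) hn π γ θ α2 β (ev wb)))
          * zeta M ((K:ℤ) * (((ev wa : ℕ):ℤ) - ((ev wb : ℕ):ℤ))) := by
        rw [Finset.sum_comm]
        apply Finset.sum_congr rfl; intro wa _
        rw [Finset.sum_comm]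
    _ = ∑ wa : Fin (m+1) → Fin p, ∑ wb : Fin (m+1) → Fin p,
          (p:ℂ) * (if wa (Fin.last m) = wb (Fin.last m) then
            zeta p ((Q p (m+1) wa - Q p (m+1) wb
                + ∑ u : Fin (m+1), (γ (π u) : ℤ) * (((wa u : ℕ):ℤ) - ((wb u : ℕ):ℤ)))
              + ((α1:ℤ) * ((wa 0 : ℕ):ℤ) - (α2:ℤ) * ((wb 0 : ℕ):ℤ)))
            * zeta M (∑ u : Fin (m+1),
                ((K:ℤ) * ((p ^ (m + 1 - 1 - ((π u : Fin (m+1)) : ℕ)) : ℕ) : ℤ))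
                * (((wa u : ℕ):ℤ) - ((wb u : ℕ):ℤ))) else 0) := by
        apply Finset.sum_congr rfl; intro wa _
        apply Finset.sum_congr rfl; intro wb _
        have hsum : (∑ u : Fin (m+1), (γ (π u) : ℤ) * ((wa u : ℕ):ℤ))
            - (∑ u : Fin (m+1), (γ (π u) : ℤ) * ((wb u : ℕ):ℤ))
            = ∑ u : Fin (m+1), (γ (π u) : ℤ) * (((wa u : ℕ):ℤ) - ((wb u : ℕ):ℤ)) := by
          rw [← Finset.sum_sub_distrib]
          exact Finset.sum_congr rfl (fun u _ => by ring)
        have hT : (K:ℤ) * (((ev wa : ℕ):ℤ) - ((ev wb : ℕ):ℤ))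
            = ∑ u : Fin (m+1),
                ((K:ℤ) * ((p ^ (m + 1 - 1 - ((π u : Fin (m+1)) : ℕ)) : ℕ) : ℤ))
                * (((wa u : ℕ):ℤ) - ((wb u : ℕ):ℤ)) := by
          rw [hev]
          show (K:ℤ) * (((enc p (m+1) (fun i => wa (π.symm i)) : ℕ):ℤ)
              - ((enc p (m+1) (fun i => wb (π.symm i)) : ℕ):ℤ)) = _
          rw [enc_reindex, enc_reindex, ← Finset.sum_sub_distrib, Finset.mul_sum]
          apply Finset.sum_congr rfl; intro u _
          ring
        have hterm : ∀ β : ℕ,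
            zeta p (Gval p (m+1) hn π γ θ α1 β (ev wa))
            * (starRingEnd ℂ) (zeta p (Gval p (m+1) hn π γ θ α2 β (ev wb)))
            * zeta M ((K:ℤ) * (((ev wa : ℕ):ℤ) - ((ev wb : ℕ):ℤ)))
            = zeta p ((β : ℤ) * (((wa (Fin.last m) : ℕ) : ℤ) - ((wb (Fin.last m) : ℕ) : ℤ))) *
              (zeta p ((Q p (m+1) wa - Q p (m+1) wb
                  + ∑ u : Fin (m+1), (γ (π u) : ℤ) * (((wa u : ℕ):ℤ) - ((wb u : ℕ):ℤ)))
                + ((α1:ℤ) * ((wa 0 : ℕ):ℤ) - (α2:ℤ) * ((wb 0 : ℕ):ℤ)))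
              * zeta M (∑ u : Fin (m+1),
                  ((K:ℤ) * ((p ^ (m + 1 - 1 - ((π u : Fin (m+1)) : ℕ)) : ℕ) : ℤ))
                  * (((wa u : ℕ):ℤ) - ((wb u : ℕ):ℤ)))) := by
          intro β
          rw [hev]
          show zeta p (Gval p (m+1) hn π γ θ α1 β (enc p (m+1) (fun i => wa (π.symm i))))
            * (starRingEnd ℂ) (zeta p (Gval p (m+1) hn π γ θ α2 β (enc p (m+1) (fun i => wb (π.symm i)))))
            * zeta M ((K:ℤ) * (((ev wa : ℕ):ℤ) - ((ev wb : ℕ):ℤ))) = _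
          rw [Gval_enc p hp1 m hn π γ θ α1 β wa, Gval_enc p hp1 m hn π γ θ α2 β wb,
            conj_zeta, ← zeta_add, hT]
          rw [show (Q p (m+1) wa + (∑ u : Fin (m+1), (γ (π u) : ℤ) * ((wa u : ℕ) : ℤ)) + (θ : ℤ)
                + (α1 : ℤ) * ((wa 0 : ℕ) : ℤ) + (β : ℤ) * ((wa (Fin.last m) : ℕ) : ℤ)
                + -(Q p (m+1) wb + (∑ u : Fin (m+1), (γ (π u) : ℤ) * ((wb u : ℕ) : ℤ)) + (θ : ℤ)
                + (α2 : ℤ) * ((wb 0 : ℕ) : ℤ) + (β : ℤ) * ((wb (Fin.last m) : ℕ) : ℤ)))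
              = (β : ℤ) * (((wa (Fin.last m) : ℕ) : ℤ) - ((wb (Fin.last m) : ℕ) : ℤ))
                + ((Q p (m+1) wa - Q p (m+1) wb
                  + ∑ u : Fin (m+1), (γ (π u) : ℤ) * (((wa u : ℕ):ℤ) - ((wb u : ℕ):ℤ)))
                + ((α1:ℤ) * ((wa 0 : ℕ):ℤ) - (α2:ℤ) * ((wb 0 : ℕ):ℤ))) by
            linear_combination hsum]
          rw [zeta_add]
          ring
        rw [Finset.sum_congr rfl (fun β _ => hterm β), ← Finset.sum_mul]
        rw [zeta_sum_orth' p hp1 (((wa (Fin.last m) : ℕ) : ℤ) - ((wb (Fin.last m) : ℕ) : ℤ)) (by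
          rw [abs_lt]
          have h1 : ((wa (Fin.last m) : ℕ) : ℤ) < p := by exact_mod_cast (wa (Fin.last m)).isLt
          have h2 : ((wb (Fin.last m) : ℕ) : ℤ) < p := by exact_mod_cast (wb (Fin.last m)).isLt
          have h3 : (0:ℤ) ≤ ((wa (Fin.last m) : ℕ) : ℤ) := Int.natCast_nonneg _
          have h4 : (0:ℤ) ≤ ((wb (Fin.last m) : ℕ) : ℤ) := Int.natCast_nonneg _
          constructor <;> omega)]
        have hcond : ((((wa (Fin.last m) : ℕ) : ℤ) - ((wb (Fin.last m) : ℕ) : ℤ)) = 0)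
            ↔ (wa (Fin.last m) = wb (Fin.last m)) := by
          rw [sub_eq_zero]
          constructor
          · intro h; exact Fin.ext (by exact_mod_cast h)
          · intro h; rw [h]
        by_cases hc : wa (Fin.last m) = wb (Fin.last m)
        · rw [if_pos (hcond.mpr hc), if_pos hc]
        · rw [if_neg (fun h => hc (hcond.mp h)), if_neg hc, zero_mul, mul_zero]
    _ = (p:ℂ) * ∑ wa : Fin (m+1) → Fin p, ∑ wb : Fin (m+1) → Fin p,
          (if wa (Fin.last m) = wb (Fin.last m) then
            zeta p ((Q p (m+1) wa - Q p (m+1) wb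
                + ∑ u : Fin (m+1), (γ (π u) : ℤ) * (((wa u : ℕ):ℤ) - ((wb u : ℕ):ℤ)))
              + ((α1:ℤ) * ((wa 0 : ℕ):ℤ) - (α2:ℤ) * ((wb 0 : ℕ):ℤ)))
            * zeta M (∑ u : Fin (m+1),
                ((K:ℤ) * ((p ^ (m + 1 - 1 - ((π u : Fin (m+1)) : ℕ)) : ℕ) : ℤ))
                * (((wa u : ℕ):ℤ) - ((wb u : ℕ):ℤ))) else 0) := by
        rw [Finset.mul_sum]
        apply Finset.sum_congr rfl; intro wa _
        rw [Finset.mul_sum]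
    _ = (p:ℂ) * ((p:ℂ)^m * ∑ y ∈ Finset.range p, zeta p (((α1:ℤ) - (α2:ℤ)) * y)) := by
        rw [claimT p M hp hM (α1:ℤ) (α2:ℤ) m (fun u => (γ (π u) : ℤ))
          (fun u => (K:ℤ) * ((p ^ (m + 1 - 1 - ((π u : Fin (m+1)) : ℕ)) : ℕ) : ℤ))]
    _ = if α1 = α2 then (p:ℂ)^(m+2) else 0 := by
        have hG : (∑ y ∈ Finset.range p, zeta p (((α1:ℤ) - (α2:ℤ)) * y))
            = if (p:ℤ) ∣ ((α1:ℤ) - (α2:ℤ)) then (p:ℂ) else 0 := by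
          rw [← zeta_sum_orth p hp1 ((α1:ℤ) - (α2:ℤ))]
          apply Finset.sum_congr rfl; intro k _
          congr 1
          ring
        rw [hG]
        have hiff : ((p:ℤ) ∣ ((α1:ℤ) - (α2:ℤ))) ↔ α1 = α2 := by
          constructor
          · intro hdvd
            by_contra hne
            have h0 : ((α1:ℤ) - (α2:ℤ)) ≠ 0 := by
              intro h; apply hne; omega
            have h1 := Int.le_of_dvd (abs_pos.mpr h0) ((dvd_abs _ _).mpr hdvd)
            have h2 : |(α1:ℤ) - (α2:ℤ)| < p := by
              rw [abs_lt]; constructor <;> omega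
            omega
          · intro h; rw [h]; simp
        by_cases he : α1 = α2
        · rw [if_pos ((hiff.mpr he)), if_pos he]
          rw [show m + 2 = (m + 1) + 1 from rfl, pow_succ, pow_succ]
          ring
        · rw [if_neg (fun h => he (hiff.mp h)), if_neg he]
          ring

lemma accs_eq_S (N : ℕ) (hN : 1 ≤ N) (a b : ℕ → ℂ) (τ : ℤ) (hτ : |τ| < (N:ℤ)) :
    accs N a b τ = ∑ I ∈ Finset.range N, ∑ J ∈ Finset.range N,
      (if (I:ℤ) - (J:ℤ) = τ then a I * (starRingEnd ℂ) (b J) else 0) := by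
  rw [abs_lt] at hτ
  by_cases h0 : 0 ≤ τ
  · set t := τ.toNat with htdef
    have ht : (t:ℤ) = τ := Int.toNat_of_nonneg h0
    have htN : t < N := by omega
    rw [accs, if_pos ⟨h0, by omega⟩]
    rw [Finset.sum_comm]
    have hJ : ∀ J ∈ Finset.range N,
        (∑ I ∈ Finset.range N, if (I:ℤ) - (J:ℤ) = τ then a I * (starRingEnd ℂ) (b J) else 0)
        = if J + t < N then a (J + t) * (starRingEnd ℂ) (b J) else 0 := by
      intro J hJmem
      have hc : ∀ I : ℕ, ((I:ℤ) - (J:ℤ) = τ) ↔ (I = J + t) := by intro I; omega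
      rw [Finset.sum_congr rfl
        (fun I _ => if_congr (hc I) rfl rfl)]
      rw [Finset.sum_ite_eq' (Finset.range N) (J + t) (fun I => a I * (starRingEnd ℂ) (b J))]
      simp only [Finset.mem_range]
    rw [Finset.sum_congr rfl hJ]
    rw [← Finset.sum_subset (Finset.range_subset_range.mpr (by omega : N - t ≤ N))
      (fun J _ hJ2 => by
        rw [if_neg]
        rw [Finset.mem_range] at hJ2
        omega)]
    apply Finset.sum_congr rfl
    intro J hJmem
    rw [Finset.mem_range] at hJmem
    rw [if_pos (by omega)]
  · set t := (-τ).toNat with htdef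
    have ht : (t:ℤ) = -τ := Int.toNat_of_nonneg (by omega)
    have htN : t < N := by omega
    rw [accs, if_neg (by omega), if_pos ⟨by omega, by omega⟩]
    have hI : ∀ I ∈ Finset.range N,
        (∑ J ∈ Finset.range N, if (I:ℤ) - (J:ℤ) = τ then a I * (starRingEnd ℂ) (b J) else 0)
        = if I + t < N then a I * (starRingEnd ℂ) (b (I + t)) else 0 := by
      intro I hImem
      have hc : ∀ J : ℕ, ((I:ℤ) - (J:ℤ) = τ) ↔ (J = I + t) := by intro J; omega
      rw [Finset.sum_congr rfl
        (fun J _ => if_congr (hc J) rfl rfl)]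
      rw [Finset.sum_ite_eq' (Finset.range N) (I + t) (fun J => a I * (starRingEnd ℂ) (b J))]
      simp only [Finset.mem_range]
    rw [Finset.sum_congr rfl hI]
    rw [← Finset.sum_subset (Finset.range_subset_range.mpr (by omega : N - t ≤ N))
      (fun I _ hI2 => by
        rw [if_neg]
        rw [Finset.mem_range] at hI2
        omega)]
    apply Finset.sum_congr rfl
    intro I hImem
    rw [Finset.mem_range] at hImem
    rw [if_pos (by omega)]

lemma sum4_swap {s1 s2 s3 s4 : Finset ℕ} (f : ℕ → ℕ → ℕ → ℕ → ℂ) :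
    (∑ b ∈ s1, ∑ i ∈ s2, ∑ j ∈ s3, ∑ k ∈ s4, f b i j k)
    = ∑ k ∈ s4, ∑ b ∈ s1, ∑ i ∈ s2, ∑ j ∈ s3, f b i j k := by
  calc (∑ b ∈ s1, ∑ i ∈ s2, ∑ j ∈ s3, ∑ k ∈ s4, f b i j k)
      = ∑ b ∈ s1, ∑ i ∈ s2, ∑ k ∈ s4, ∑ j ∈ s3, f b i j k :=
        Finset.sum_congr rfl fun b _ => Finset.sum_congr rfl fun i _ => Finset.sum_comm
    _ = ∑ b ∈ s1, ∑ k ∈ s4, ∑ i ∈ s2, ∑ j ∈ s3, f b i j k :=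
        Finset.sum_congr rfl fun b _ => Finset.sum_comm
    _ = ∑ k ∈ s4, ∑ b ∈ s1, ∑ i ∈ s2, ∑ j ∈ s3, f b i j k := Finset.sum_comm

lemma sum3_pull {s1 s2 s3 : Finset ℕ} (c z : ℂ) (Y : ℕ → ℕ → ℕ → ℂ) :
    (∑ b ∈ s1, ∑ i ∈ s2, ∑ j ∈ s3, c * (Y b i j * z))
    = c * ((∑ b ∈ s1, ∑ i ∈ s2, ∑ j ∈ s3, Y b i j) * z) := by
  rw [Finset.sum_mul, Finset.mul_sum]
  apply Finset.sum_congr rfl; intro b _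
  rw [Finset.sum_mul, Finset.mul_sum]
  apply Finset.sum_congr rfl; intro i _
  rw [Finset.sum_mul, Finset.mul_sum]

lemma keyL (p m : ℕ) (hp : 2 ≤ p) (hn : 1 ≤ m + 1) (π : Equiv.Perm (Fin (m+1)))
    (γ : Fin (m+1) → ℕ) (θ : ℕ) (α1 α2 : ℕ) (hα1 : α1 < p) (hα2 : α2 < p)
    (τ : ℤ) (hτ : |τ| < ((p^(m+1) : ℕ) : ℤ)) :
    (∑ β ∈ Finset.range p, accs (p^(m+1))
        (fun I => zeta p (Gval p (m+1) hn π γ θ α1 β I))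
        (fun I => zeta p (Gval p (m+1) hn π γ θ α2 β I)) τ)
    = (if α1 = α2 then (p:ℂ)^(m+2) else 0) * (if τ = 0 then 1 else 0) := by
  have hN1 : 1 ≤ p^(m+1) := Nat.one_le_pow _ _ (by omega)
  have hM1 : 1 ≤ 2 * p^(m+1) := by omega
  have hMC : ((2 * p^(m+1) : ℕ) : ℂ) ≠ 0 := Nat.cast_ne_zero.mpr (by omega)
  have hcast2 : ((2 * p^(m+1) : ℕ) : ℤ) = 2 * ((p^(m+1) : ℕ) : ℤ) := by push_cast; ring
  have per : ∀ (x : ℂ) (I J : ℕ), I ∈ Finset.range (p^(m+1)) → J ∈ Finset.range (p^(m+1)) →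
      (if (I:ℤ) - (J:ℤ) = τ then x else 0)
      = (1/((2*p^(m+1) : ℕ):ℂ)) * ∑ K ∈ Finset.range (2*p^(m+1)),
          (x * zeta (2*p^(m+1)) ((K:ℤ)*((I:ℤ)-(J:ℤ)))) * zeta (2*p^(m+1)) ((K:ℤ)*(-τ)) := by
    intro x I J hI hJ
    rw [Finset.mem_range] at hI hJ
    have h1 : ∀ K : ℕ, (x * zeta (2*p^(m+1)) ((K:ℤ)*((I:ℤ)-(J:ℤ)))) * zeta (2*p^(m+1)) ((K:ℤ)*(-τ))
        = x * zeta (2*p^(m+1)) ((K:ℤ)*(((I:ℤ)-(J:ℤ)) - τ)) := by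
      intro K
      rw [mul_assoc, ← zeta_add]
      congr 2
      ring
    rw [Finset.sum_congr rfl (fun K _ => h1 K), ← Finset.mul_sum,
      zeta_sum_orth' (2*p^(m+1)) hM1 (((I:ℤ)-(J:ℤ)) - τ) (by
        rw [abs_lt] at hτ ⊢
        have hIN : (I:ℤ) < ((p^(m+1):ℕ):ℤ) := by exact_mod_cast hI
        have hJN : (J:ℤ) < ((p^(m+1):ℕ):ℤ) := by exact_mod_cast hJ
        have hI0 : (0:ℤ) ≤ (I:ℤ) := Int.natCast_nonneg _
        have hJ0 : (0:ℤ) ≤ (J:ℤ) := Int.natCast_nonneg _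
        rw [hcast2]
        constructor <;> omega)]
    by_cases h : (I:ℤ) - (J:ℤ) = τ
    · rw [if_pos h, if_pos (by omega)]
      rw [mul_comm x, ← mul_assoc, one_div, inv_mul_cancel₀ hMC, one_mul]
    · rw [if_neg h, if_neg (by intro hz; exact h (by omega)), mul_zero, mul_zero]
  calc (∑ β ∈ Finset.range p, accs (p^(m+1))
        (fun I => zeta p (Gval p (m+1) hn π γ θ α1 β I))
        (fun I => zeta p (Gval p (m+1) hn π γ θ α2 β I)) τ)
      = ∑ β ∈ Finset.range p, ∑ I ∈ Finset.range (p^(m+1)), ∑ J ∈ Finset.range (p^(m+1)),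
          (if (I:ℤ) - (J:ℤ) = τ then zeta p (Gval p (m+1) hn π γ θ α1 β I)
            * (starRingEnd ℂ) (zeta p (Gval p (m+1) hn π γ θ α2 β J)) else 0) :=
        Finset.sum_congr rfl (fun β _ => accs_eq_S _ hN1 _ _ τ hτ)
    _ = ∑ β ∈ Finset.range p, ∑ I ∈ Finset.range (p^(m+1)), ∑ J ∈ Finset.range (p^(m+1)),
          ∑ K ∈ Finset.range (2*p^(m+1)),
          (1/((2*p^(m+1) : ℕ):ℂ)) * (((zeta p (Gval p (m+1) hn π γ θ α1 β I)
            * (starRingEnd ℂ) (zeta p (Gval p (m+1) hn π γ θ α2 β J))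
            * zeta (2*p^(m+1)) ((K:ℤ)*((I:ℤ)-(J:ℤ))))
            * zeta (2*p^(m+1)) ((K:ℤ)*(-τ)))) := by
        refine Finset.sum_congr rfl fun β _ => Finset.sum_congr rfl fun I hI =>
          Finset.sum_congr rfl fun J hJ => ?_
        rw [per _ I J hI hJ, Finset.mul_sum]
    _ = ∑ K ∈ Finset.range (2*p^(m+1)), ∑ β ∈ Finset.range p, ∑ I ∈ Finset.range (p^(m+1)),
          ∑ J ∈ Finset.range (p^(m+1)),
          (1/((2*p^(m+1) : ℕ):ℂ)) * (((zeta p (Gval p (m+1) hn π γ θ α1 β I)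
            * (starRingEnd ℂ) (zeta p (Gval p (m+1) hn π γ θ α2 β J))
            * zeta (2*p^(m+1)) ((K:ℤ)*((I:ℤ)-(J:ℤ))))
            * zeta (2*p^(m+1)) ((K:ℤ)*(-τ)))) := sum4_swap _
    _ = ∑ K ∈ Finset.range (2*p^(m+1)),
          (1/((2*p^(m+1) : ℕ):ℂ)) * (((∑ β ∈ Finset.range p, ∑ I ∈ Finset.range (p^(m+1)),
            ∑ J ∈ Finset.range (p^(m+1)), zeta p (Gval p (m+1) hn π γ θ α1 β I)
            * (starRingEnd ℂ) (zeta p (Gval p (m+1) hn π γ θ α2 β J))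
            * zeta (2*p^(m+1)) ((K:ℤ)*((I:ℤ)-(J:ℤ))))
            * zeta (2*p^(m+1)) ((K:ℤ)*(-τ)))) :=
        Finset.sum_congr rfl fun K _ => sum3_pull _ _ _
    _ = ∑ K ∈ Finset.range (2*p^(m+1)),
          (1/((2*p^(m+1) : ℕ):ℂ)) * ((if α1 = α2 then (p:ℂ)^(m+2) else 0)
            * zeta (2*p^(m+1)) ((K:ℤ)*(-τ))) := by
        refine Finset.sum_congr rfl fun K _ => ?_
        rw [lemA p m hp hn π γ θ α1 α2 hα1 hα2 (2*p^(m+1)) hM1 K]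
    _ = (if α1 = α2 then (p:ℂ)^(m+2) else 0) * (if τ = 0 then 1 else 0) := by
        rw [← Finset.mul_sum, ← Finset.mul_sum,
          zeta_sum_orth' (2*p^(m+1)) hM1 (-τ) (by
            rw [abs_lt] at hτ ⊢
            rw [hcast2]
            constructor <;> omega)]
        by_cases hτ0 : τ = 0
        · rw [if_pos (by omega : -τ = 0), if_pos hτ0, mul_one,
            mul_comm (if α1 = α2 then (p:ℂ)^(m+2) else 0) ((2*p^(m+1) : ℕ):ℂ),
            ← mul_assoc, one_div, inv_mul_cancel₀ hMC, one_mul]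
        · rw [if_neg (by omega : ¬ (-τ = 0)), if_neg hτ0]
          ring

/-- Remark 2 (CCC special case, `r = 0`, single path, `q = p`): the `p` codes
`C_α = [χ(F_0^α);…;χ(F_{p-1}^α)]`, `0 ≤ α < p`, form a `(p,p,p^n)`-CCC: all
cross-correlation sums vanish for `0 < |τ| < p^n`; at `τ = 0` they vanish for
`α^1 ≠ α^2` and equal `p·p^n` for `α^1 = α^2`. -/
theorem stmt_13 (p n : ℕ) (hp : 2 ≤ p) (hn : 1 ≤ n)
    (π : Equiv.Perm (Fin n)) (γ : Fin n → ℕ) (hγ : ∀ i, γ i < p) (θ : ℕ) (hθ : θ < p) :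
    ∀ α1 < p, ∀ α2 < p,
      (∀ τ : ℤ, 0 < |τ| → |τ| < (p ^ n : ℤ) →
        ∑ β ∈ Finset.range p,
          accs (p ^ n)
            (fun I => zeta p (Gval p n hn π γ θ α1 β I))
            (fun I => zeta p (Gval p n hn π γ θ α2 β I)) τ = 0) ∧
      (α1 ≠ α2 →
        ∑ β ∈ Finset.range p,
          accs (p ^ n)
            (fun I => zeta p (Gval p n hn π γ θ α1 β I))
            (fun I => zeta p (Gval p n hn π γ θ α2 β I)) 0 = 0) ∧
      (α1 = α2 →
        ∑ β ∈ Finset.range p,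
          accs (p ^ n)
            (fun I => zeta p (Gval p n hn π γ θ α1 β I))
            (fun I => zeta p (Gval p n hn π γ θ α2 β I)) 0 = (p : ℂ) * (p : ℂ) ^ n) := by
  obtain ⟨m, rfl⟩ : ∃ m, n = m + 1 := ⟨n - 1, by omega⟩
  intro α1 hα1 α2 hα2
  have hτ0 : |(0:ℤ)| < ((p^(m+1) : ℕ) : ℤ) := by
    simp only [abs_zero]
    exact_mod_cast Nat.pos_of_ne_zero (by positivity)
  refine ⟨?_, ?_, ?_⟩
  · intro τ h1 h2
    have hτ : |τ| < ((p^(m+1) : ℕ) : ℤ) := by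
      rw [Nat.cast_pow]
      exact h2
    rw [keyL p m hp hn π γ θ α1 α2 hα1 hα2 τ hτ]
    have hτne : ¬ (τ = 0) := by intro h; rw [h] at h1; simp at h1
    rw [if_neg hτne, mul_zero]
  · intro hne
    rw [keyL p m hp hn π γ θ α1 α2 hα1 hα2 0 hτ0]
    rw [if_neg hne, zero_mul]
  · intro heq
    rw [keyL p m hp hn π γ θ α1 α2 hα1 hα2 0 hτ0]
    rw [if_pos heq, if_pos rfl, mul_one]
    rw [show m + 2 = (m + 1) + 1 from rfl, pow_succ]
    ring
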